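/- In Map₂, the ordered products of the entries of the factorizations W₀, W₁ and W₂ are all equal to the identity element 1. -/

import Mathlib

/-- A single Hurwitz move: replace two consecutive entries `(x, y)` by `(x y x⁻¹, x)`. -/
def HurwitzMove {G : Type*} [Group G] (F F' : List G) : Prop :=
  ∃ (l₁ l₂ : List G) (x y : G),
    F = l₁ ++ x :: y :: l₂ ∧ F' = l₁ ++ (x * y * x⁻¹) :: x :: l₂

/-- Hurwitz equivalence: the reflexive-symmetric-transitive closure of Hurwitz moves.
(The symmetric closure accounts for the inverse move `(x, y) ↦ (y, y⁻¹ x y)`.) -/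
def HurwitzEquiv {G : Type*} [Group G] : List G → List G → Prop :=
  Relation.EqvGen HurwitzMove

/-- `n`-fold concatenation of a factorization with itself. -/
def fpow {G : Type*} (F : List G) (n : ℕ) : List G :=
  (List.replicate n F).flatten

/-- Simultaneous conjugation of all entries of a factorization by `φ`: `τ ↦ φ⁻¹ τ φ`. -/
def fconj {G : Type*} [Group G] (F : List G) (φ : G) : List G :=
  F.map fun τ => φ⁻¹ * τ * φ

/-- Generators of the free group on five letters. -/
abbrev fg (i : Fin 5) : FreeGroup (Fin 5) := FreeGroup.of i

/-- The word `ζ₁ζ₂ζ₃ζ₄ζ₅` in the free group. -/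
def Δw : FreeGroup (Fin 5) := fg 0 * fg 1 * fg 2 * fg 3 * fg 4

/-- The word `ζ₁ζ₂ζ₃ζ₄ζ₅²ζ₄ζ₃ζ₂ζ₁` in the free group. -/
def Iw : FreeGroup (Fin 5) :=
  fg 0 * fg 1 * fg 2 * fg 3 * fg 4 * fg 4 * fg 3 * fg 2 * fg 1 * fg 0

/-- Relations for the presentation of the genus-2 mapping class group `Map₂`:
commutations `ζᵢζⱼ = ζⱼζᵢ` for `|i - j| ≥ 2`, braid relations
`ζᵢζᵢ₊₁ζᵢ = ζᵢ₊₁ζᵢζᵢ₊₁`, `(ζ₁ζ₂ζ₃ζ₄ζ₅)⁶ = 1`, `I = ζ₁ζ₂ζ₃ζ₄ζ₅²ζ₄ζ₃ζ₂ζ₁` is central,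
and `I² = 1`. -/
def map2Rels : Set (FreeGroup (Fin 5)) :=
  { r | (∃ i j : Fin 5, (i : ℕ) + 2 ≤ (j : ℕ) ∧ r = fg i * fg j * (fg i)⁻¹ * (fg j)⁻¹) ∨
        (∃ i : Fin 4, r = fg i.castSucc * fg i.succ * fg i.castSucc *
          (fg i.succ * fg i.castSucc * fg i.succ)⁻¹) ∨
        r = Δw ^ 6 ∨
        (∃ i : Fin 5, r = Iw * fg i * Iw⁻¹ * (fg i)⁻¹) ∨
        r = Iw ^ 2 }

/-- The mapping class group of a closed genus-2 surface, via its standard presentation. -/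
abbrev Map₂ : Type := PresentedGroup map2Rels

/-- The Dehn twist generators `ζ₁, …, ζ₅` (indexed by `Fin 5`, so `ζ 0 = ζ₁`, …). -/
def ζ (i : Fin 5) : Map₂ := PresentedGroup.of i

/-- The hyperelliptic involution `I = ζ₁ζ₂ζ₃ζ₄ζ₅²ζ₄ζ₃ζ₂ζ₁` as an element of `Map₂`. -/
def Ihe : Map₂ := ζ 0 * ζ 1 * ζ 2 * ζ 3 * ζ 4 * ζ 4 * ζ 3 * ζ 2 * ζ 1 * ζ 0

/-- The separating Dehn twist `σ = (ζ₁ζ₂)⁶`. -/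
def σ : Map₂ := (ζ 0 * ζ 1) ^ 6

/-- The factorization `T = ζ₁·ζ₂·ζ₃·ζ₄·ζ₅·ζ₅·ζ₄·ζ₃·ζ₂·ζ₁`. -/
def T : List Map₂ := [ζ 0, ζ 1, ζ 2, ζ 3, ζ 4, ζ 4, ζ 3, ζ 2, ζ 1, ζ 0]

/-- The factorization `W₀ = (T)²`. -/
def W₀ : List Map₂ := T ++ T

/-- The factorization `W₁ = (ζ₁·ζ₂·ζ₃·ζ₄·ζ₅)⁶`. -/
def W₁ : List Map₂ := fpow [ζ 0, ζ 1, ζ 2, ζ 3, ζ 4] 6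

/-- The factorization `Φ_f = ζ₃·ζ₄·ζ₅·ζ₂·ζ₃·ζ₄·ζ₁·ζ₂·ζ₃`. -/
def Φf : List Map₂ := [ζ 2, ζ 3, ζ 4, ζ 1, ζ 2, ζ 3, ζ 0, ζ 1, ζ 2]

/-- The factorization `W₂ = σ·(ζ₃·ζ₄·ζ₅·ζ₂·ζ₃·ζ₄·ζ₁·ζ₂·ζ₃)²·T`. -/
def W₂ : List Map₂ := σ :: (Φf ++ Φf ++ T)


section aux

private lemma mk_rel {r : FreeGroup (Fin 5)} (h : r ∈ map2Rels) :
    PresentedGroup.mk map2Rels r = 1 :=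
  (QuotientGroup.eq_one_iff r).mpr (Subgroup.subset_normalClosure h)

private lemma comm_rel (i j : Fin 5) (h : (i : ℕ) + 2 ≤ (j : ℕ)) : ζ i * ζ j = ζ j * ζ i := by
  have h1 := mk_rel (Or.inl ⟨i, j, h, rfl⟩)
  simp only [map_mul, map_inv] at h1
  rw [mul_inv_eq_one, mul_inv_eq_iff_eq_mul] at h1
  exact h1

private lemma braid_rel (i : Fin 4) :
    ζ i.castSucc * ζ i.succ * ζ i.castSucc = ζ i.succ * ζ i.castSucc * ζ i.succ := by
  have h1 := mk_rel (Or.inr (Or.inl ⟨i, rfl⟩))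
  simp only [map_mul, map_inv] at h1
  rw [mul_inv_eq_one] at h1
  exact h1

private lemma c02 : ζ 0 * ζ 2 = ζ 2 * ζ 0 := comm_rel 0 2 (by decide)
private lemma c03 : ζ 0 * ζ 3 = ζ 3 * ζ 0 := comm_rel 0 3 (by decide)
private lemma c04 : ζ 0 * ζ 4 = ζ 4 * ζ 0 := comm_rel 0 4 (by decide)
private lemma c13 : ζ 1 * ζ 3 = ζ 3 * ζ 1 := comm_rel 1 3 (by decide)
private lemma c14 : ζ 1 * ζ 4 = ζ 4 * ζ 1 := comm_rel 1 4 (by decide)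
private lemma c24 : ζ 2 * ζ 4 = ζ 4 * ζ 2 := comm_rel 2 4 (by decide)
private lemma b0 : ζ 0 * ζ 1 * ζ 0 = ζ 1 * ζ 0 * ζ 1 := braid_rel 0
private lemma b1 : ζ 1 * ζ 2 * ζ 1 = ζ 2 * ζ 1 * ζ 2 := braid_rel 1
private lemma b2 : ζ 2 * ζ 3 * ζ 2 = ζ 3 * ζ 2 * ζ 3 := braid_rel 2
private lemma b3 : ζ 3 * ζ 4 * ζ 3 = ζ 4 * ζ 3 * ζ 4 := braid_rel 3

private lemma wcomm (i j : Fin 5) (h : ζ i * ζ j = ζ j * ζ i) (y : Map₂) :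
    ζ i * (ζ j * y) = ζ j * (ζ i * y) := by rw [← mul_assoc, h, mul_assoc]

private lemma wbraid (i j : Fin 5) (h : ζ i * ζ j * ζ i = ζ j * ζ i * ζ j) (y : Map₂) :
    ζ i * (ζ j * (ζ i * y)) = ζ j * (ζ i * (ζ j * y)) := by
  rw [← mul_assoc, ← mul_assoc, h, mul_assoc, mul_assoc]

private lemma ebraid (i j : Fin 5) (h : ζ i * ζ j * ζ i = ζ j * ζ i * ζ j) :
    ζ i * (ζ j * ζ i) = ζ j * (ζ i * ζ j) := by rw [← mul_assoc, h, mul_assoc]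

private lemma delta6 : (ζ 0 * ζ 1 * ζ 2 * ζ 3 * ζ 4) ^ 6 = 1 := by
  have h1 := mk_rel (Or.inr (Or.inr (Or.inl rfl)))
  simp only [Δw, map_pow, map_mul] at h1
  exact h1

private lemma central_gen (i : Fin 5) : Ihe * ζ i = ζ i * Ihe := by
  have h1 := mk_rel (Or.inr (Or.inr (Or.inr (Or.inl ⟨i, rfl⟩))))
  simp only [Iw, map_mul, map_inv] at h1
  rw [mul_inv_eq_one, mul_inv_eq_iff_eq_mul] at h1
  exact h1

private lemma Isq : Ihe * Ihe = 1 := by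
  have h1 := mk_rel (Or.inr (Or.inr (Or.inr (Or.inr rfl))))
  simp only [Iw, map_pow, map_mul] at h1
  rw [pow_two] at h1
  exact h1

private lemma hcen (g : Map₂) : g * Ihe = Ihe * g := by
  have h1 : g ∈ Subgroup.centralizer {Ihe} := by
    refine PresentedGroup.generated_by map2Rels _ (fun j => ?_) g
    rw [Subgroup.mem_centralizer_iff]
    rintro h rfl
    exact central_gen j
  exact ((Subgroup.mem_centralizer_iff.mp h1) Ihe rfl).symm

private lemma LA :
    ζ 2 * ζ 3 * ζ 4 * ζ 1 * ζ 2 * ζ 3 * ζ 0 * ζ 1 * ζ 2 * (ζ 3 * ζ 4) ^ 3 =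
      (ζ 0 * ζ 1 * ζ 2 * ζ 3 * ζ 4) ^ 3 := by
  simp only [pow_succ, pow_zero, pow_one, one_mul, mul_assoc]
  conv_lhs => rw [wcomm 3 0 c03.symm (ζ 1 * (ζ 2 * (ζ 3 * (ζ 4 * (ζ 3 * (ζ 4 * (ζ 3 * (ζ 4)))))))),
    wcomm 3 1 c13.symm (ζ 2 * (ζ 3 * (ζ 4 * (ζ 3 * (ζ 4 * (ζ 3 * (ζ 4))))))),
    wbraid 3 2 b2.symm (ζ 4 * (ζ 3 * (ζ 4 * (ζ 3 * (ζ 4))))),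
    wcomm 2 4 c24 (ζ 3 * (ζ 4 * (ζ 3 * (ζ 4)))),
    wcomm 2 0 c02.symm (ζ 1 * (ζ 2 * (ζ 3 * (ζ 4 * (ζ 2 * (ζ 3 * (ζ 4 * (ζ 3 * (ζ 4))))))))),
    wbraid 2 1 b1.symm (ζ 3 * (ζ 4 * (ζ 2 * (ζ 3 * (ζ 4 * (ζ 3 * (ζ 4))))))),
    wcomm 1 3 c13 (ζ 4 * (ζ 2 * (ζ 3 * (ζ 4 * (ζ 3 * (ζ 4)))))),
    wcomm 1 4 c14 (ζ 2 * (ζ 3 * (ζ 4 * (ζ 3 * (ζ 4))))),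
    wbraid 1 0 b0.symm (ζ 2 * (ζ 3 * (ζ 4 * (ζ 1 * (ζ 2 * (ζ 3 * (ζ 4 * (ζ 3 * (ζ 4))))))))),
    wcomm 0 2 c02 (ζ 3 * (ζ 4 * (ζ 1 * (ζ 2 * (ζ 3 * (ζ 4 * (ζ 3 * (ζ 4)))))))),
    wcomm 0 3 c03 (ζ 4 * (ζ 1 * (ζ 2 * (ζ 3 * (ζ 4 * (ζ 3 * (ζ 4))))))),
    wcomm 0 4 c04 (ζ 1 * (ζ 2 * (ζ 3 * (ζ 4 * (ζ 3 * (ζ 4)))))),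
    wcomm 4 0 c04.symm (ζ 1 * (ζ 2 * (ζ 3 * (ζ 4 * (ζ 0 * (ζ 1 * (ζ 2 * (ζ 3 * (ζ 4 * (ζ 3 * (ζ 4))))))))))),
    wcomm 4 1 c14.symm (ζ 2 * (ζ 3 * (ζ 4 * (ζ 0 * (ζ 1 * (ζ 2 * (ζ 3 * (ζ 4 * (ζ 3 * (ζ 4)))))))))),
    wcomm 4 2 c24.symm (ζ 3 * (ζ 4 * (ζ 0 * (ζ 1 * (ζ 2 * (ζ 3 * (ζ 4 * (ζ 3 * (ζ 4))))))))),
    wbraid 4 3 b3.symm (ζ 0 * (ζ 1 * (ζ 2 * (ζ 3 * (ζ 4 * (ζ 3 * (ζ 4))))))),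
    wcomm 3 0 c03.symm (ζ 1 * (ζ 2 * (ζ 3 * (ζ 4 * (ζ 3 * (ζ 0 * (ζ 1 * (ζ 2 * (ζ 3 * (ζ 4 * (ζ 3 * (ζ 4)))))))))))),
    wcomm 3 1 c13.symm (ζ 2 * (ζ 3 * (ζ 4 * (ζ 3 * (ζ 0 * (ζ 1 * (ζ 2 * (ζ 3 * (ζ 4 * (ζ 3 * (ζ 4))))))))))),
    wbraid 3 2 b2.symm (ζ 4 * (ζ 3 * (ζ 0 * (ζ 1 * (ζ 2 * (ζ 3 * (ζ 4 * (ζ 3 * (ζ 4))))))))),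
    wcomm 2 4 c24 (ζ 3 * (ζ 0 * (ζ 1 * (ζ 2 * (ζ 3 * (ζ 4 * (ζ 3 * (ζ 4)))))))),
    wcomm 2 0 c02.symm (ζ 1 * (ζ 2 * (ζ 3 * (ζ 4 * (ζ 2 * (ζ 3 * (ζ 0 * (ζ 1 * (ζ 2 * (ζ 3 * (ζ 4 * (ζ 3 * (ζ 4))))))))))))),
    wbraid 2 1 b1.symm (ζ 3 * (ζ 4 * (ζ 2 * (ζ 3 * (ζ 0 * (ζ 1 * (ζ 2 * (ζ 3 * (ζ 4 * (ζ 3 * (ζ 4))))))))))),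
    wcomm 1 3 c13 (ζ 4 * (ζ 2 * (ζ 3 * (ζ 0 * (ζ 1 * (ζ 2 * (ζ 3 * (ζ 4 * (ζ 3 * (ζ 4)))))))))),
    wcomm 1 4 c14 (ζ 2 * (ζ 3 * (ζ 0 * (ζ 1 * (ζ 2 * (ζ 3 * (ζ 4 * (ζ 3 * (ζ 4))))))))),
    wcomm 3 0 c03.symm (ζ 1 * (ζ 2 * (ζ 3 * (ζ 4 * (ζ 3 * (ζ 4)))))),
    wcomm 3 1 c13.symm (ζ 2 * (ζ 3 * (ζ 4 * (ζ 3 * (ζ 4))))),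
    wbraid 3 2 b2.symm (ζ 4 * (ζ 3 * (ζ 4))),
    wcomm 2 4 c24 (ζ 3 * (ζ 4)),
    wcomm 2 0 c02.symm (ζ 1 * (ζ 2 * (ζ 3 * (ζ 4 * (ζ 2 * (ζ 3 * (ζ 4))))))),
    wbraid 2 1 b1.symm (ζ 3 * (ζ 4 * (ζ 2 * (ζ 3 * (ζ 4))))),
    wcomm 1 3 c13 (ζ 4 * (ζ 2 * (ζ 3 * (ζ 4)))),
    wcomm 1 4 c14 (ζ 2 * (ζ 3 * (ζ 4))),
    wbraid 1 0 b0.symm (ζ 2 * (ζ 3 * (ζ 4 * (ζ 1 * (ζ 2 * (ζ 3 * (ζ 4))))))),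
    wcomm 0 2 c02 (ζ 3 * (ζ 4 * (ζ 1 * (ζ 2 * (ζ 3 * (ζ 4)))))),
    wcomm 0 3 c03 (ζ 4 * (ζ 1 * (ζ 2 * (ζ 3 * (ζ 4))))),
    wcomm 0 4 c04 (ζ 1 * (ζ 2 * (ζ 3 * (ζ 4))))]

private lemma LB :
    ζ 2 * ζ 3 * ζ 4 * ζ 1 * ζ 2 * ζ 3 * ζ 0 * ζ 1 * ζ 2 * (ζ 0 * ζ 1) ^ 3 =
      (ζ 4 * ζ 3 * ζ 2 * ζ 1 * ζ 0) ^ 3 := by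
  simp only [pow_succ, pow_zero, pow_one, one_mul, mul_assoc]
  conv_lhs => rw [wcomm 4 1 c14.symm (ζ 2 * (ζ 3 * (ζ 0 * (ζ 1 * (ζ 2 * (ζ 0 * (ζ 1 * (ζ 0 * (ζ 1 * (ζ 0 * (ζ 1))))))))))),
    wcomm 3 1 c13.symm (ζ 4 * (ζ 2 * (ζ 3 * (ζ 0 * (ζ 1 * (ζ 2 * (ζ 0 * (ζ 1 * (ζ 0 * (ζ 1 * (ζ 0 * (ζ 1)))))))))))),
    wcomm 4 2 c24.symm (ζ 3 * (ζ 0 * (ζ 1 * (ζ 2 * (ζ 0 * (ζ 1 * (ζ 0 * (ζ 1 * (ζ 0 * (ζ 1)))))))))),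
    wcomm 3 0 c03.symm (ζ 1 * (ζ 2 * (ζ 0 * (ζ 1 * (ζ 0 * (ζ 1 * (ζ 0 * (ζ 1)))))))),
    wcomm 4 0 c04.symm (ζ 3 * (ζ 1 * (ζ 2 * (ζ 0 * (ζ 1 * (ζ 0 * (ζ 1 * (ζ 0 * (ζ 1))))))))),
    wcomm 2 0 c02.symm (ζ 4 * (ζ 3 * (ζ 1 * (ζ 2 * (ζ 0 * (ζ 1 * (ζ 0 * (ζ 1 * (ζ 0 * (ζ 1)))))))))),
    wcomm 3 0 c03.symm (ζ 2 * (ζ 4 * (ζ 3 * (ζ 1 * (ζ 2 * (ζ 0 * (ζ 1 * (ζ 0 * (ζ 1 * (ζ 0 * (ζ 1))))))))))),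
    wcomm 3 1 c13.symm (ζ 2 * (ζ 0 * (ζ 1 * (ζ 0 * (ζ 1 * (ζ 0 * (ζ 1))))))),
    wcomm 4 1 c14.symm (ζ 3 * (ζ 2 * (ζ 0 * (ζ 1 * (ζ 0 * (ζ 1 * (ζ 0 * (ζ 1)))))))),
    wbraid 0 1 b0 (ζ 1 * (ζ 0 * (ζ 1))),
    ebraid 1 0 b0.symm,
    wcomm 1 4 c14 (ζ 3 * (ζ 2 * (ζ 1 * (ζ 0 * (ζ 1 * (ζ 0 * (ζ 1 * (ζ 0)))))))),
    wcomm 1 3 c13 (ζ 2 * (ζ 1 * (ζ 0 * (ζ 1 * (ζ 0 * (ζ 1 * (ζ 0))))))),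
    wbraid 1 2 b1 (ζ 0 * (ζ 1 * (ζ 0 * (ζ 1 * (ζ 0))))),
    wcomm 2 0 c02.symm (ζ 1 * (ζ 0 * (ζ 1 * (ζ 0)))),
    wcomm 2 4 c24 (ζ 3 * (ζ 2 * (ζ 1 * (ζ 0 * (ζ 2 * (ζ 1 * (ζ 0 * (ζ 1 * (ζ 0))))))))),
    wbraid 2 3 b2 (ζ 1 * (ζ 0 * (ζ 2 * (ζ 1 * (ζ 0 * (ζ 1 * (ζ 0))))))),
    wcomm 3 1 c13.symm (ζ 0 * (ζ 2 * (ζ 1 * (ζ 0 * (ζ 1 * (ζ 0)))))),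
    wcomm 3 0 c03.symm (ζ 2 * (ζ 1 * (ζ 0 * (ζ 1 * (ζ 0))))),
    wbraid 3 4 b3 (ζ 2 * (ζ 1 * (ζ 0 * (ζ 3 * (ζ 2 * (ζ 1 * (ζ 0 * (ζ 1 * (ζ 0))))))))),
    wcomm 4 2 c24.symm (ζ 1 * (ζ 0 * (ζ 3 * (ζ 2 * (ζ 1 * (ζ 0 * (ζ 1 * (ζ 0)))))))),
    wcomm 4 1 c14.symm (ζ 0 * (ζ 3 * (ζ 2 * (ζ 1 * (ζ 0 * (ζ 1 * (ζ 0))))))),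
    wcomm 4 0 c04.symm (ζ 3 * (ζ 2 * (ζ 1 * (ζ 0 * (ζ 1 * (ζ 0)))))),
    wcomm 0 4 c04 (ζ 3 * (ζ 2 * (ζ 1 * (ζ 0 * (ζ 4 * (ζ 3 * (ζ 2 * (ζ 1 * (ζ 0 * (ζ 1 * (ζ 0))))))))))),
    wcomm 0 3 c03 (ζ 2 * (ζ 1 * (ζ 0 * (ζ 4 * (ζ 3 * (ζ 2 * (ζ 1 * (ζ 0 * (ζ 1 * (ζ 0)))))))))),
    wcomm 0 2 c02 (ζ 1 * (ζ 0 * (ζ 4 * (ζ 3 * (ζ 2 * (ζ 1 * (ζ 0 * (ζ 1 * (ζ 0))))))))),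
    wbraid 0 1 b0 (ζ 4 * (ζ 3 * (ζ 2 * (ζ 1 * (ζ 0 * (ζ 1 * (ζ 0))))))),
    wcomm 1 4 c14 (ζ 3 * (ζ 2 * (ζ 1 * (ζ 0 * (ζ 1 * (ζ 4 * (ζ 3 * (ζ 2 * (ζ 1 * (ζ 0 * (ζ 1 * (ζ 0)))))))))))),
    wcomm 1 3 c13 (ζ 2 * (ζ 1 * (ζ 0 * (ζ 1 * (ζ 4 * (ζ 3 * (ζ 2 * (ζ 1 * (ζ 0 * (ζ 1 * (ζ 0))))))))))),
    wbraid 1 2 b1 (ζ 0 * (ζ 1 * (ζ 4 * (ζ 3 * (ζ 2 * (ζ 1 * (ζ 0 * (ζ 1 * (ζ 0))))))))),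
    wcomm 2 0 c02.symm (ζ 1 * (ζ 4 * (ζ 3 * (ζ 2 * (ζ 1 * (ζ 0 * (ζ 1 * (ζ 0)))))))),
    wcomm 2 4 c24 (ζ 3 * (ζ 2 * (ζ 1 * (ζ 0 * (ζ 2 * (ζ 1 * (ζ 4 * (ζ 3 * (ζ 2 * (ζ 1 * (ζ 0 * (ζ 1 * (ζ 0))))))))))))),
    wbraid 2 3 b2 (ζ 1 * (ζ 0 * (ζ 2 * (ζ 1 * (ζ 4 * (ζ 3 * (ζ 2 * (ζ 1 * (ζ 0 * (ζ 1 * (ζ 0))))))))))),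
    wcomm 3 1 c13.symm (ζ 0 * (ζ 2 * (ζ 1 * (ζ 4 * (ζ 3 * (ζ 2 * (ζ 1 * (ζ 0 * (ζ 1 * (ζ 0)))))))))),
    wcomm 3 0 c03.symm (ζ 2 * (ζ 1 * (ζ 4 * (ζ 3 * (ζ 2 * (ζ 1 * (ζ 0 * (ζ 1 * (ζ 0))))))))),
    wcomm 1 4 c14 (ζ 3 * (ζ 2 * (ζ 1 * (ζ 0 * (ζ 1 * (ζ 0)))))),
    wcomm 1 3 c13 (ζ 2 * (ζ 1 * (ζ 0 * (ζ 1 * (ζ 0))))),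
    wbraid 1 2 b1 (ζ 0 * (ζ 1 * (ζ 0))),
    wcomm 2 0 c02.symm (ζ 1 * (ζ 0)),
    wcomm 2 4 c24 (ζ 3 * (ζ 2 * (ζ 1 * (ζ 0 * (ζ 2 * (ζ 1 * (ζ 0))))))),
    wbraid 2 3 b2 (ζ 1 * (ζ 0 * (ζ 2 * (ζ 1 * (ζ 0))))),
    wcomm 3 1 c13.symm (ζ 0 * (ζ 2 * (ζ 1 * (ζ 0)))),
    wcomm 3 0 c03.symm (ζ 2 * (ζ 1 * (ζ 0))),
    wbraid 3 4 b3 (ζ 2 * (ζ 1 * (ζ 0 * (ζ 3 * (ζ 2 * (ζ 1 * (ζ 0))))))),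
    wcomm 4 2 c24.symm (ζ 1 * (ζ 0 * (ζ 3 * (ζ 2 * (ζ 1 * (ζ 0)))))),
    wcomm 4 1 c14.symm (ζ 0 * (ζ 3 * (ζ 2 * (ζ 1 * (ζ 0))))),
    wcomm 4 0 c04.symm (ζ 3 * (ζ 2 * (ζ 1 * (ζ 0))))]

private lemma LC :
    (ζ 0 * ζ 1 * ζ 2 * ζ 3 * ζ 4) ^ 3 * (ζ 0 * ζ 1) ^ 3 =
      (ζ 3 * ζ 4) ^ 3 * (ζ 0 * ζ 1 * ζ 2 * ζ 3 * ζ 4) ^ 3 := by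
  simp only [pow_succ, pow_zero, pow_one, one_mul, mul_assoc]
  conv_lhs => rw [wcomm 4 0 c04.symm (ζ 1 * (ζ 0 * (ζ 1 * (ζ 0 * (ζ 1))))),
    wcomm 3 0 c03.symm (ζ 4 * (ζ 1 * (ζ 0 * (ζ 1 * (ζ 0 * (ζ 1)))))),
    wcomm 2 0 c02.symm (ζ 3 * (ζ 4 * (ζ 1 * (ζ 0 * (ζ 1 * (ζ 0 * (ζ 1))))))),
    wbraid 0 1 b0 (ζ 2 * (ζ 3 * (ζ 4 * (ζ 1 * (ζ 0 * (ζ 1 * (ζ 0 * (ζ 1)))))))),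
    wcomm 4 1 c14.symm (ζ 0 * (ζ 1 * (ζ 2 * (ζ 3 * (ζ 4 * (ζ 1 * (ζ 0 * (ζ 1 * (ζ 0 * (ζ 1)))))))))),
    wcomm 3 1 c13.symm (ζ 4 * (ζ 0 * (ζ 1 * (ζ 2 * (ζ 3 * (ζ 4 * (ζ 1 * (ζ 0 * (ζ 1 * (ζ 0 * (ζ 1))))))))))),
    wbraid 1 2 b1 (ζ 3 * (ζ 4 * (ζ 0 * (ζ 1 * (ζ 2 * (ζ 3 * (ζ 4 * (ζ 1 * (ζ 0 * (ζ 1 * (ζ 0 * (ζ 1)))))))))))),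
    wcomm 0 2 c02 (ζ 1 * (ζ 2 * (ζ 3 * (ζ 4 * (ζ 0 * (ζ 1 * (ζ 2 * (ζ 3 * (ζ 4 * (ζ 1 * (ζ 0 * (ζ 1 * (ζ 0 * (ζ 1)))))))))))))),
    wcomm 4 2 c24.symm (ζ 0 * (ζ 1 * (ζ 2 * (ζ 3 * (ζ 4 * (ζ 0 * (ζ 1 * (ζ 2 * (ζ 3 * (ζ 4 * (ζ 1 * (ζ 0 * (ζ 1 * (ζ 0 * (ζ 1))))))))))))))),
    wbraid 2 3 b2 (ζ 4 * (ζ 0 * (ζ 1 * (ζ 2 * (ζ 3 * (ζ 4 * (ζ 0 * (ζ 1 * (ζ 2 * (ζ 3 * (ζ 4 * (ζ 1 * (ζ 0 * (ζ 1 * (ζ 0 * (ζ 1)))))))))))))))),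
    wcomm 1 3 c13 (ζ 2 * (ζ 3 * (ζ 4 * (ζ 0 * (ζ 1 * (ζ 2 * (ζ 3 * (ζ 4 * (ζ 0 * (ζ 1 * (ζ 2 * (ζ 3 * (ζ 4 * (ζ 1 * (ζ 0 * (ζ 1 * (ζ 0 * (ζ 1)))))))))))))))))),
    wcomm 0 3 c03 (ζ 1 * (ζ 2 * (ζ 3 * (ζ 4 * (ζ 0 * (ζ 1 * (ζ 2 * (ζ 3 * (ζ 4 * (ζ 0 * (ζ 1 * (ζ 2 * (ζ 3 * (ζ 4 * (ζ 1 * (ζ 0 * (ζ 1 * (ζ 0 * (ζ 1))))))))))))))))))),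
    wcomm 4 1 c14.symm (ζ 0 * (ζ 1 * (ζ 0 * (ζ 1)))),
    wcomm 3 1 c13.symm (ζ 4 * (ζ 0 * (ζ 1 * (ζ 0 * (ζ 1))))),
    wbraid 1 2 b1 (ζ 3 * (ζ 4 * (ζ 0 * (ζ 1 * (ζ 0 * (ζ 1)))))),
    wcomm 0 2 c02 (ζ 1 * (ζ 2 * (ζ 3 * (ζ 4 * (ζ 0 * (ζ 1 * (ζ 0 * (ζ 1)))))))),
    wcomm 4 2 c24.symm (ζ 0 * (ζ 1 * (ζ 2 * (ζ 3 * (ζ 4 * (ζ 0 * (ζ 1 * (ζ 0 * (ζ 1))))))))),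
    wbraid 2 3 b2 (ζ 4 * (ζ 0 * (ζ 1 * (ζ 2 * (ζ 3 * (ζ 4 * (ζ 0 * (ζ 1 * (ζ 0 * (ζ 1)))))))))),
    wcomm 1 3 c13 (ζ 2 * (ζ 3 * (ζ 4 * (ζ 0 * (ζ 1 * (ζ 2 * (ζ 3 * (ζ 4 * (ζ 0 * (ζ 1 * (ζ 0 * (ζ 1)))))))))))),
    wcomm 0 3 c03 (ζ 1 * (ζ 2 * (ζ 3 * (ζ 4 * (ζ 0 * (ζ 1 * (ζ 2 * (ζ 3 * (ζ 4 * (ζ 0 * (ζ 1 * (ζ 0 * (ζ 1))))))))))))),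
    wbraid 3 4 b3 (ζ 0 * (ζ 1 * (ζ 2 * (ζ 3 * (ζ 4 * (ζ 0 * (ζ 1 * (ζ 2 * (ζ 3 * (ζ 4 * (ζ 0 * (ζ 1 * (ζ 0 * (ζ 1)))))))))))))),
    wcomm 2 4 c24 (ζ 3 * (ζ 4 * (ζ 0 * (ζ 1 * (ζ 2 * (ζ 3 * (ζ 4 * (ζ 0 * (ζ 1 * (ζ 2 * (ζ 3 * (ζ 4 * (ζ 0 * (ζ 1 * (ζ 0 * (ζ 1)))))))))))))))),
    wcomm 1 4 c14 (ζ 2 * (ζ 3 * (ζ 4 * (ζ 0 * (ζ 1 * (ζ 2 * (ζ 3 * (ζ 4 * (ζ 0 * (ζ 1 * (ζ 2 * (ζ 3 * (ζ 4 * (ζ 0 * (ζ 1 * (ζ 0 * (ζ 1))))))))))))))))),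
    wcomm 0 4 c04 (ζ 1 * (ζ 2 * (ζ 3 * (ζ 4 * (ζ 0 * (ζ 1 * (ζ 2 * (ζ 3 * (ζ 4 * (ζ 0 * (ζ 1 * (ζ 2 * (ζ 3 * (ζ 4 * (ζ 0 * (ζ 1 * (ζ 0 * (ζ 1)))))))))))))))))),
    wcomm 4 0 c04.symm (ζ 1 * (ζ 0 * (ζ 1))),
    wcomm 3 0 c03.symm (ζ 4 * (ζ 1 * (ζ 0 * (ζ 1)))),
    wcomm 2 0 c02.symm (ζ 3 * (ζ 4 * (ζ 1 * (ζ 0 * (ζ 1))))),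
    wbraid 0 1 b0 (ζ 2 * (ζ 3 * (ζ 4 * (ζ 1 * (ζ 0 * (ζ 1)))))),
    wcomm 4 1 c14.symm (ζ 0 * (ζ 1 * (ζ 2 * (ζ 3 * (ζ 4 * (ζ 1 * (ζ 0 * (ζ 1)))))))),
    wcomm 3 1 c13.symm (ζ 4 * (ζ 0 * (ζ 1 * (ζ 2 * (ζ 3 * (ζ 4 * (ζ 1 * (ζ 0 * (ζ 1))))))))),
    wbraid 1 2 b1 (ζ 3 * (ζ 4 * (ζ 0 * (ζ 1 * (ζ 2 * (ζ 3 * (ζ 4 * (ζ 1 * (ζ 0 * (ζ 1)))))))))),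
    wcomm 0 2 c02 (ζ 1 * (ζ 2 * (ζ 3 * (ζ 4 * (ζ 0 * (ζ 1 * (ζ 2 * (ζ 3 * (ζ 4 * (ζ 1 * (ζ 0 * (ζ 1)))))))))))),
    wcomm 4 2 c24.symm (ζ 0 * (ζ 1 * (ζ 2 * (ζ 3 * (ζ 4 * (ζ 0 * (ζ 1 * (ζ 2 * (ζ 3 * (ζ 4 * (ζ 1 * (ζ 0 * (ζ 1))))))))))))),
    wbraid 2 3 b2 (ζ 4 * (ζ 0 * (ζ 1 * (ζ 2 * (ζ 3 * (ζ 4 * (ζ 0 * (ζ 1 * (ζ 2 * (ζ 3 * (ζ 4 * (ζ 1 * (ζ 0 * (ζ 1)))))))))))))),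
    wcomm 1 3 c13 (ζ 2 * (ζ 3 * (ζ 4 * (ζ 0 * (ζ 1 * (ζ 2 * (ζ 3 * (ζ 4 * (ζ 0 * (ζ 1 * (ζ 2 * (ζ 3 * (ζ 4 * (ζ 1 * (ζ 0 * (ζ 1)))))))))))))))),
    wcomm 0 3 c03 (ζ 1 * (ζ 2 * (ζ 3 * (ζ 4 * (ζ 0 * (ζ 1 * (ζ 2 * (ζ 3 * (ζ 4 * (ζ 0 * (ζ 1 * (ζ 2 * (ζ 3 * (ζ 4 * (ζ 1 * (ζ 0 * (ζ 1))))))))))))))))),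
    wcomm 4 1 c14.symm (ζ 0 * (ζ 1)),
    wcomm 3 1 c13.symm (ζ 4 * (ζ 0 * (ζ 1))),
    wbraid 1 2 b1 (ζ 3 * (ζ 4 * (ζ 0 * (ζ 1)))),
    wcomm 0 2 c02 (ζ 1 * (ζ 2 * (ζ 3 * (ζ 4 * (ζ 0 * (ζ 1)))))),
    wcomm 4 2 c24.symm (ζ 0 * (ζ 1 * (ζ 2 * (ζ 3 * (ζ 4 * (ζ 0 * (ζ 1))))))),
    wbraid 2 3 b2 (ζ 4 * (ζ 0 * (ζ 1 * (ζ 2 * (ζ 3 * (ζ 4 * (ζ 0 * (ζ 1)))))))),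
    wcomm 1 3 c13 (ζ 2 * (ζ 3 * (ζ 4 * (ζ 0 * (ζ 1 * (ζ 2 * (ζ 3 * (ζ 4 * (ζ 0 * (ζ 1)))))))))),
    wcomm 0 3 c03 (ζ 1 * (ζ 2 * (ζ 3 * (ζ 4 * (ζ 0 * (ζ 1 * (ζ 2 * (ζ 3 * (ζ 4 * (ζ 0 * (ζ 1))))))))))),
    wbraid 3 4 b3 (ζ 0 * (ζ 1 * (ζ 2 * (ζ 3 * (ζ 4 * (ζ 0 * (ζ 1 * (ζ 2 * (ζ 3 * (ζ 4 * (ζ 0 * (ζ 1)))))))))))),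
    wcomm 2 4 c24 (ζ 3 * (ζ 4 * (ζ 0 * (ζ 1 * (ζ 2 * (ζ 3 * (ζ 4 * (ζ 0 * (ζ 1 * (ζ 2 * (ζ 3 * (ζ 4 * (ζ 0 * (ζ 1)))))))))))))),
    wcomm 1 4 c14 (ζ 2 * (ζ 3 * (ζ 4 * (ζ 0 * (ζ 1 * (ζ 2 * (ζ 3 * (ζ 4 * (ζ 0 * (ζ 1 * (ζ 2 * (ζ 3 * (ζ 4 * (ζ 0 * (ζ 1))))))))))))))),
    wcomm 0 4 c04 (ζ 1 * (ζ 2 * (ζ 3 * (ζ 4 * (ζ 0 * (ζ 1 * (ζ 2 * (ζ 3 * (ζ 4 * (ζ 0 * (ζ 1 * (ζ 2 * (ζ 3 * (ζ 4 * (ζ 0 * (ζ 1)))))))))))))))),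
    wcomm 4 0 c04.symm (ζ 1),
    wcomm 3 0 c03.symm (ζ 4 * (ζ 1)),
    wcomm 2 0 c02.symm (ζ 3 * (ζ 4 * (ζ 1))),
    wbraid 0 1 b0 (ζ 2 * (ζ 3 * (ζ 4 * (ζ 1)))),
    wcomm 4 1 c14.symm (ζ 0 * (ζ 1 * (ζ 2 * (ζ 3 * (ζ 4 * (ζ 1)))))),
    wcomm 3 1 c13.symm (ζ 4 * (ζ 0 * (ζ 1 * (ζ 2 * (ζ 3 * (ζ 4 * (ζ 1))))))),
    wbraid 1 2 b1 (ζ 3 * (ζ 4 * (ζ 0 * (ζ 1 * (ζ 2 * (ζ 3 * (ζ 4 * (ζ 1)))))))),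
    wcomm 0 2 c02 (ζ 1 * (ζ 2 * (ζ 3 * (ζ 4 * (ζ 0 * (ζ 1 * (ζ 2 * (ζ 3 * (ζ 4 * (ζ 1)))))))))),
    wcomm 4 2 c24.symm (ζ 0 * (ζ 1 * (ζ 2 * (ζ 3 * (ζ 4 * (ζ 0 * (ζ 1 * (ζ 2 * (ζ 3 * (ζ 4 * (ζ 1))))))))))),
    wbraid 2 3 b2 (ζ 4 * (ζ 0 * (ζ 1 * (ζ 2 * (ζ 3 * (ζ 4 * (ζ 0 * (ζ 1 * (ζ 2 * (ζ 3 * (ζ 4 * (ζ 1)))))))))))),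
    wcomm 1 3 c13 (ζ 2 * (ζ 3 * (ζ 4 * (ζ 0 * (ζ 1 * (ζ 2 * (ζ 3 * (ζ 4 * (ζ 0 * (ζ 1 * (ζ 2 * (ζ 3 * (ζ 4 * (ζ 1)))))))))))))),
    wcomm 0 3 c03 (ζ 1 * (ζ 2 * (ζ 3 * (ζ 4 * (ζ 0 * (ζ 1 * (ζ 2 * (ζ 3 * (ζ 4 * (ζ 0 * (ζ 1 * (ζ 2 * (ζ 3 * (ζ 4 * (ζ 1))))))))))))))),
    c14.symm,
    wcomm 3 1 c13.symm (ζ 4),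
    wbraid 1 2 b1 (ζ 3 * (ζ 4)),
    wcomm 0 2 c02 (ζ 1 * (ζ 2 * (ζ 3 * (ζ 4)))),
    wcomm 4 2 c24.symm (ζ 0 * (ζ 1 * (ζ 2 * (ζ 3 * (ζ 4))))),
    wbraid 2 3 b2 (ζ 4 * (ζ 0 * (ζ 1 * (ζ 2 * (ζ 3 * (ζ 4)))))),
    wcomm 1 3 c13 (ζ 2 * (ζ 3 * (ζ 4 * (ζ 0 * (ζ 1 * (ζ 2 * (ζ 3 * (ζ 4)))))))),
    wcomm 0 3 c03 (ζ 1 * (ζ 2 * (ζ 3 * (ζ 4 * (ζ 0 * (ζ 1 * (ζ 2 * (ζ 3 * (ζ 4))))))))),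
    wbraid 3 4 b3 (ζ 0 * (ζ 1 * (ζ 2 * (ζ 3 * (ζ 4 * (ζ 0 * (ζ 1 * (ζ 2 * (ζ 3 * (ζ 4)))))))))),
    wcomm 2 4 c24 (ζ 3 * (ζ 4 * (ζ 0 * (ζ 1 * (ζ 2 * (ζ 3 * (ζ 4 * (ζ 0 * (ζ 1 * (ζ 2 * (ζ 3 * (ζ 4)))))))))))),
    wcomm 1 4 c14 (ζ 2 * (ζ 3 * (ζ 4 * (ζ 0 * (ζ 1 * (ζ 2 * (ζ 3 * (ζ 4 * (ζ 0 * (ζ 1 * (ζ 2 * (ζ 3 * (ζ 4))))))))))))),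
    wcomm 0 4 c04 (ζ 1 * (ζ 2 * (ζ 3 * (ζ 4 * (ζ 0 * (ζ 1 * (ζ 2 * (ζ 3 * (ζ 4 * (ζ 0 * (ζ 1 * (ζ 2 * (ζ 3 * (ζ 4))))))))))))))]

end aux

/-- In `Map₂`, the ordered products of the entries of `W₀`, `W₁` and `W₂` all equal `1`. -/
theorem products_eq_one : W₀.prod = 1 ∧ W₁.prod = 1 ∧ W₂.prod = 1 := by
  have hT : T.prod = Ihe := by
    simp only [T, Ihe, List.prod_cons, List.prod_nil, mul_one, mul_assoc]
  have hW0 : W₀.prod = 1 := by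
    rw [W₀, List.prod_append, hT, Isq]
  have hW1 : W₁.prod = 1 := by
    have e : W₁.prod = (ζ 0 * ζ 1 * ζ 2 * ζ 3 * ζ 4) ^ 6 := by
      show (fpow [ζ 0, ζ 1, ζ 2, ζ 3, ζ 4] 6).prod = _
      simp only [fpow, List.replicate, List.flatten, List.append_eq, List.append_nil, List.cons_append,
        List.nil_append, List.prod_cons, List.prod_nil, mul_one, pow_succ, pow_zero, pow_one, one_mul, mul_assoc]
    rw [e, delta6]
  refine ⟨hW0, hW1, ?_⟩
  -- abbreviations
  set D : Map₂ := ζ 0 * ζ 1 * ζ 2 * ζ 3 * ζ 4 with hDdef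
  set Db : Map₂ := ζ 4 * ζ 3 * ζ 2 * ζ 1 * ζ 0 with hDbdef
  set A : Map₂ := (ζ 0 * ζ 1) ^ 3 with hAdef
  set B : Map₂ := (ζ 3 * ζ 4) ^ 3 with hBdef
  set P : Map₂ := ζ 2 * ζ 3 * ζ 4 * ζ 1 * ζ 2 * ζ 3 * ζ 0 * ζ 1 * ζ 2 with hPdef
  have hID : D * Db = Ihe := by rw [hDdef, hDbdef, Ihe]; group
  have LA' : P * B = D ^ 3 := by rw [hPdef, hBdef, hDdef]; exact LA
  have LB' : P * A = Db ^ 3 := by rw [hPdef, hAdef, hDbdef]; exact LB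
  have LC' : D ^ 3 * A = B * D ^ 3 := by rw [hDdef, hAdef, hBdef]; exact LC
  have hP : P = D ^ 3 * B⁻¹ := eq_mul_inv_of_mul_eq LA'
  have hBeq : B = D ^ 3 * A * (D ^ 3)⁻¹ := by
    rw [eq_mul_inv_iff_mul_eq]; exact LC'.symm
  have hDb : Db = D⁻¹ * Ihe := by rw [← hID]; group
  have hI3 : Ihe ^ 3 = Ihe := by
    rw [pow_succ, pow_two, Isq, one_mul]
  have hDb3 : Db ^ 3 = (D ^ 3)⁻¹ * Ihe := by
    have hc : Commute D⁻¹ Ihe := hcen D⁻¹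
    rw [hDb, hc.mul_pow, hI3]
    group
  have h6 : P * (P * A) = A⁻¹ * Ihe := by
    rw [LB', hDb3, hP]
    have e1 : D ^ 3 * B⁻¹ * ((D ^ 3)⁻¹ * Ihe) = D ^ 6 * A⁻¹ * (D ^ 6)⁻¹ * Ihe := by
      rw [hBeq]; group
    have d6 : D ^ 6 = 1 := by rw [hDdef]; exact delta6
    rw [e1, d6]
    group
  have h7 : P * (P * Ihe) = (P * (P * A)) * (A⁻¹ * Ihe) := by group
  have h8 : P * (P * Ihe) = A⁻¹ * (Ihe * A⁻¹) * Ihe := by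
    rw [h7, h6]; group
  have h9 : P * (P * Ihe) = A⁻¹ * A⁻¹ * (Ihe * Ihe) := by
    rw [h8, ← hcen A⁻¹]; group
  have key : A ^ 2 * (P * (P * Ihe)) = 1 := by
    rw [h9, Isq, mul_one]; group
  have e2 : W₂.prod = A ^ 2 * (P * (P * Ihe)) := by
    rw [hAdef, hPdef, Ihe]
    simp only [W₂, σ, Φf, T, List.cons_append, List.nil_append, List.prod_cons,
      List.prod_append, List.prod_nil, mul_one, pow_succ, pow_zero, pow_one, one_mul, mul_assoc]
  rw [e2, key]
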